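/- In the SFBF setup with constant step size α ∈ (0, 1/(√2 L)), fix x* ∈ 𝒳_* and let ρ = 1 − 2α²L², σ̂(x*) = max{σ(x*),σ₀}, a(x*) = σ̂(x*)² α² C₂² c₁. Choose φ ∈ (0,(√5−1)/2) and let n₀ be the first integer with Σ_{i ≥ n₀} 1/m_{i+1} ≤ φ/a(x*). Define Γ_n = Σ_{i=0}^{n} 1/m_{i+1}, Γ²_n = Σ_{i=0}^{n} 1/m_{i+1}², δ_n(x*) = ‖X_n − x*‖², H(x*,n₀,φ) = (1 + max_{0≤i≤n₀} E[δ_i(x*)])/(1 − φ − φ²), Λ_n(x*,φ) = (2/ρ)·(E[δ₀(x*)] + (1 + H(x*,n₀,φ))·(a(x*)Γ_n + a(x*)²Γ²_n)), Λ_∞(x*,φ) = sup_{n≥0} Λ_n(x*,φ), and for ε > 0 the stopping time N_ε = inf{n ≥ 0 : E[r_α(X_n)²] ≤ ε}. Then either N_ε = 0, or E[r_α(X_{N_ε})²] ≤ ε < Λ_∞(x*,φ)/N_ε. -/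

import Mathlib

open MeasureTheory
open scoped RealInnerProductSpace

set_option maxHeartbeats 2000000 in
/-- `O(1/n)` convergence rate of the expected squared natural residual for SFBF with
constant step size (Theorem 5.3): either `N_ε = 0` or
`E[r_α(X_{N_ε})²] ≤ ε < Λ_∞(x*,φ)/N_ε`. -/
theorem stmt_16 {d : ℕ} {Ω : Type*} [mΩ : MeasurableSpace Ω]
    (μ : Measure Ω) [IsProbabilityMeasure μ]
    (𝒳 : Set (EuclideanSpace ℝ (Fin d)))
    (h𝒳ne : 𝒳.Nonempty) (h𝒳cl : IsClosed 𝒳) (h𝒳cv : Convex ℝ 𝒳)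
    (proj : EuclideanSpace ℝ (Fin d) → EuclideanSpace ℝ (Fin d))
    (hproj_mem : ∀ x, proj x ∈ 𝒳)
    (hproj_char : ∀ x, ∀ y ∈ 𝒳, ⟪x - proj x, y - proj x⟫ ≤ 0)
    (T : EuclideanSpace ℝ (Fin d) → EuclideanSpace ℝ (Fin d))
    (L : ℝ) (hL : 0 < L)
    (hLip : ∀ x y, ‖T x - T y‖ ≤ L * ‖x - y‖)
    (hpm : ∀ x y, 0 ≤ ⟪T x, y - x⟫ → 0 ≤ ⟪T y, y - x⟫)
    (xs : EuclideanSpace ℝ (Fin d)) (hxs_mem : xs ∈ 𝒳)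
    (hxs_sol : ∀ y ∈ 𝒳, 0 ≤ ⟪T xs, y - xs⟫)
    -- constant step size and batch sizes
    (α : ℝ) (hα : 0 < α) (hαL : Real.sqrt 2 * L * α < 1)
    (mb : ℕ → ℕ) (hmb : ∀ n, 1 ≤ mb n)
    (hmb_sum : Summable fun n => ((mb n : ℝ))⁻¹)
    -- filtration and adapted iterates
    (𝓕 : ℕ → MeasurableSpace Ω) (h𝓕mono : ∀ n, 𝓕 n ≤ 𝓕 (n + 1)) (h𝓕Ω : ∀ n, 𝓕 n ≤ mΩ)
    (X : ℕ → Ω → EuclideanSpace ℝ (Fin d))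
    (hXad : ∀ n, StronglyMeasurable[𝓕 n] (X n))
    (hXint : ∀ n, Integrable (fun ω => ‖X n ω - xs‖ ^ 2) μ)
    (hrint : ∀ n, Integrable (fun ω => ‖X n ω - proj (X n ω - α • T (X n ω))‖ ^ 2) μ)
    -- the variance parameters and the stochastic quasi-Fejér inequality
    (σs σ₀ C₂ c₁ : ℝ) (hσs : 0 ≤ σs) (hσ₀ : 0 ≤ σ₀) (hC₂ : 0 < C₂) (hc₁ : 1 < c₁)
    (κ : ℕ → ℝ) (hκ0 : ∀ n, 0 ≤ κ n)
    (hFejer : ∀ n, ∀ᵐ ω ∂μ,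
      condExp (𝓕 n) μ (fun ω' => ‖X (n + 1) ω' - xs‖ ^ 2) ω
        ≤ ‖X n ω - xs‖ ^ 2
          - ((1 - 2 * L ^ 2 * α ^ 2) / 2) *
              ‖X n ω - proj (X n ω - α • T (X n ω))‖ ^ 2
          + (κ n / (mb (n + 1))) * (σ₀ ^ 2 * ‖X n ω - xs‖ ^ 2 + σs ^ 2))
    (hκ : ∀ n, κ n ≤ α ^ 2 * C₂ ^ 2 * c₁ * (1 + α ^ 2 * σ₀ ^ 2 * C₂ ^ 2 / (mb (n + 1))))
    -- the constants of the rate estimate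
    (ρ a φ : ℝ) (n₀ : ℕ)
    (hρ : ρ = 1 - 2 * α ^ 2 * L ^ 2)
    (ha : a = (max σs σ₀) ^ 2 * α ^ 2 * C₂ ^ 2 * c₁)
    (hφ : 0 < φ ∧ φ < (Real.sqrt 5 - 1) / 2)
    -- `n₀` is the first integer whose tail sum is at most `φ/a`
    (hn₀ : (∑' i : ℕ, ((mb (n₀ + i + 1) : ℝ))⁻¹) ≤ φ / a ∧
      ∀ k : ℕ, (∑' i : ℕ, ((mb (k + i + 1) : ℝ))⁻¹) ≤ φ / a → n₀ ≤ k)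
    (Γ Γsq Λ : ℕ → ℝ) (H Λinf : ℝ)
    (hΓ : ∀ n, Γ n = ∑ i ∈ Finset.range (n + 1), ((mb (i + 1) : ℝ))⁻¹)
    (hΓsq : ∀ n, Γsq n = ∑ i ∈ Finset.range (n + 1), (((mb (i + 1) : ℝ)) ^ 2)⁻¹)
    (hH : H = (1 + (Finset.range (n₀ + 1)).sup'
        (Finset.nonempty_range_iff.mpr (Nat.succ_ne_zero n₀))
        (fun i => ∫ ω, ‖X i ω - xs‖ ^ 2 ∂μ)) / (1 - φ - φ ^ 2))
    (hΛ : ∀ n, Λ n = (2 / ρ) *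
      ((∫ ω, ‖X 0 ω - xs‖ ^ 2 ∂μ) + (1 + H) * (a * Γ n + a ^ 2 * Γsq n)))
    (hΛinf : Λinf = ⨆ n, Λ n) :
    ∀ ε : ℝ, 0 < ε → ∀ Nε : ℕ,
      Nε = sInf {n : ℕ | ∫ ω, ‖X n ω - proj (X n ω - α • T (X n ω))‖ ^ 2 ∂μ ≤ ε} →
      (Nε = 0 ∨
        ((∫ ω, ‖X Nε ω - proj (X Nε ω - α • T (X Nε ω))‖ ^ 2 ∂μ) ≤ ε ∧
          ε < Λinf / (Nε : ℝ))) := by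

  intro ε hε Nε hNε
  by_cases hN0 : Nε = 0
  · exact Or.inl hN0
  right
  set R : ℕ → ℝ := fun n => ∫ ω, ‖X n ω - proj (X n ω - α • T (X n ω))‖ ^ 2 ∂μ with hR
  set D : ℕ → ℝ := fun n => ∫ ω, ‖X n ω - xs‖ ^ 2 ∂μ with hD
  have hD0 : ∀ n, 0 ≤ D n := fun n => integral_nonneg fun ω => sq_nonneg _
  have hR0 : ∀ n, 0 ≤ R n := fun n => integral_nonneg fun ω => sq_nonneg _
  clear_value R D
  -- positivity of ρ
  have hρpos : 0 < ρ := by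
    rw [hρ]
    have hx : 0 ≤ Real.sqrt 2 * L * α := by positivity
    have hs2 : (Real.sqrt 2) ^ 2 = 2 := Real.sq_sqrt (by norm_num)
    nlinarith [hαL, hx, hs2]
  -- basic facts about batch sizes
  have hmbpos : ∀ n, (0:ℝ) < (mb n : ℝ) := fun n => by exact_mod_cast Nat.lt_of_lt_of_le Nat.zero_lt_one (hmb n)
  have hinvpos : ∀ n, (0:ℝ) < ((mb n : ℝ))⁻¹ := fun n => inv_pos.mpr (hmbpos n)
  have hsum_tail : ∀ k : ℕ, Summable (fun i => ((mb (k + i + 1) : ℝ))⁻¹) := by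
    intro k
    have h := (summable_nat_add_iff (f := fun n => ((mb n : ℝ))⁻¹) (k + 1)).mpr hmb_sum
    refine h.congr fun i => ?_
    have hi : i + (k + 1) = k + i + 1 := by omega
    rw [hi]
  have ha0 : 0 ≤ a := by rw [ha]; positivity
  have hapos : 0 < a := by
    rcases ha0.lt_or_eq with h | h
    · exact h
    · exfalso
      have ht := hn₀.1
      rw [← h, div_zero] at ht
      have hpos : (0:ℝ) < ∑' i : ℕ, ((mb (n₀ + i + 1) : ℝ))⁻¹ :=
        lt_of_lt_of_le (hinvpos (n₀ + 0 + 1))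
          (Summable.le_tsum (hsum_tail n₀) 0 fun j _ => (hinvpos _).le)
      linarith
  have htail : a * (∑' i : ℕ, ((mb (n₀ + i + 1) : ℝ))⁻¹) ≤ φ := by
    have := (le_div_iff₀ hapos).mp hn₀.1
    linarith [this]
  -- the error sequence
  set θ : ℕ → ℝ := fun n => a * ((mb (n + 1) : ℝ))⁻¹ + a ^ 2 * (((mb (n + 1) : ℝ)) ^ 2)⁻¹ with hθdef
  have hθ0 : ∀ n, 0 ≤ θ n := fun n => by
    simp only [hθdef]
    positivity
  clear_value θ
  -- one-step recursion in expectation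
  have step : ∀ n, D (n + 1) ≤ D n - (ρ / 2) * R n
      + (κ n / (mb (n + 1))) * (σ₀ ^ 2 * D n + σs ^ 2) := by
    intro n
    have h1 := hXint n
    have h2 := hrint n
    have hint1 : Integrable (fun ω => ‖X n ω - xs‖ ^ 2
        - ((1 - 2 * L ^ 2 * α ^ 2) / 2) * ‖X n ω - proj (X n ω - α • T (X n ω))‖ ^ 2) μ := by
      exact h1.sub (h2.const_mul _)
    have hint3 : Integrable (fun ω => σ₀ ^ 2 * ‖X n ω - xs‖ ^ 2 + σs ^ 2) μ := by
      exact (h1.const_mul _).add (integrable_const _)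
    have hint2 : Integrable (fun ω =>
        (κ n / (mb (n + 1))) * (σ₀ ^ 2 * ‖X n ω - xs‖ ^ 2 + σs ^ 2)) μ := by
      exact hint3.const_mul _
    have hg : Integrable (fun ω => ‖X n ω - xs‖ ^ 2
          - ((1 - 2 * L ^ 2 * α ^ 2) / 2) * ‖X n ω - proj (X n ω - α • T (X n ω))‖ ^ 2
          + (κ n / (mb (n + 1))) * (σ₀ ^ 2 * ‖X n ω - xs‖ ^ 2 + σs ^ 2)) μ := by
      exact hint1.add hint2
    have hmono := integral_mono_ae integrable_condExp hg (hFejer n)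
    rw [integral_condExp (h𝓕Ω n)] at hmono
    rw [integral_add hint1 hint2,
        integral_sub h1 (h2.const_mul _), integral_const_mul, integral_const_mul,
        integral_add (h1.const_mul _) (integrable_const _), integral_const_mul,
        integral_const] at hmono
    simp only [measure_univ, probReal_univ, ENNReal.toReal_one, smul_eq_mul, one_mul] at hmono
    rw [hρ]
    simp only [hD, hR]
    nlinarith [hmono]
  -- bounding the error term
  have herr : ∀ n, (κ n / (mb (n + 1))) * (σ₀ ^ 2 * D n + σs ^ 2) ≤ θ n * (1 + D n) := by
    intro n
    have hm1 : (1:ℝ) ≤ ((mb (n + 1) : ℝ)) := by exact_mod_cast hmb (n + 1)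
    have hj : (0:ℝ) < ((mb (n + 1) : ℝ))⁻¹ := hinvpos (n + 1)
    have hs2 : σ₀ ^ 2 ≤ (max σs σ₀) ^ 2 := pow_le_pow_left₀ hσ₀ (le_max_right _ _) 2
    have hs1 : σs ^ 2 ≤ (max σs σ₀) ^ 2 := pow_le_pow_left₀ hσs (le_max_left _ _) 2
    have h1 : σ₀ ^ 2 * D n + σs ^ 2 ≤ (max σs σ₀) ^ 2 * (1 + D n) := by
      nlinarith [hD0 n, mul_le_mul_of_nonneg_right hs2 (hD0 n)]
    have hκn := hκ n
    rw [div_eq_mul_inv] at hκn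
    have hA := mul_le_mul_of_nonneg_left hκn (sq_nonneg (max σs σ₀))
    have hB : α ^ 2 * σ₀ ^ 2 * C₂ ^ 2 ≤ a := by
      rw [ha]
      nlinarith [mul_le_mul_of_nonneg_right hs2 (by positivity : (0:ℝ) ≤ α ^ 2 * C₂ ^ 2),
        mul_le_mul_of_nonneg_left hc₁.le
          (by positivity : (0:ℝ) ≤ (max σs σ₀) ^ 2 * α ^ 2 * C₂ ^ 2)]
    have hB' : a * (α ^ 2 * σ₀ ^ 2 * C₂ ^ 2) ≤ a * a := mul_le_mul_of_nonneg_left hB ha0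
    have hB'' : a * (α ^ 2 * σ₀ ^ 2 * C₂ ^ 2) * ((mb (n + 1) : ℝ))⁻¹
        ≤ a * a * ((mb (n + 1) : ℝ))⁻¹ := mul_le_mul_of_nonneg_right hB' hj.le
    have hEq : (max σs σ₀) ^ 2 * (α ^ 2 * C₂ ^ 2 * c₁ *
        (1 + α ^ 2 * σ₀ ^ 2 * C₂ ^ 2 * ((mb (n + 1) : ℝ))⁻¹))
        = a + a * (α ^ 2 * σ₀ ^ 2 * C₂ ^ 2) * ((mb (n + 1) : ℝ))⁻¹ := by
      rw [ha]; ring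
    have h2 : (max σs σ₀) ^ 2 * κ n ≤ a + a ^ 2 * ((mb (n + 1) : ℝ))⁻¹ := by
      nlinarith [hA, hB'', hEq]
    simp only [hθdef]
    rw [div_eq_mul_inv,
      show (((mb (n + 1) : ℝ)) ^ 2)⁻¹ = ((mb (n + 1) : ℝ))⁻¹ * ((mb (n + 1) : ℝ))⁻¹ by
        rw [sq, mul_inv]]
    have P1 := mul_le_mul_of_nonneg_left h1
      (mul_nonneg (hκ0 n) hj.le)
    have P2 := mul_le_mul_of_nonneg_right h2
      (mul_nonneg hj.le (by linarith [hD0 n] : (0:ℝ) ≤ 1 + D n))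
    nlinarith [P1, P2]
  -- step without the residual term
  have step2 : ∀ n, D (n + 1) ≤ D n + θ n * (1 + D n) := by
    intro n
    have h1 := step n
    have h2 := herr n
    nlinarith [mul_nonneg hρpos.le (hR0 n)]
  -- φ bound
  have hφ1 : 0 < 1 - φ - φ ^ 2 := by
    have h5 : (Real.sqrt 5) ^ 2 = 5 := Real.sq_sqrt (by norm_num)
    have hp1 : (0:ℝ) < Real.sqrt 5 - 1 - 2 * φ := by
      have := hφ.2
      nlinarith [this]
    have hp2 : (0:ℝ) < Real.sqrt 5 + 1 + 2 * φ := by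
      nlinarith [Real.sqrt_nonneg 5, hφ.1]
    nlinarith [mul_pos hp1 hp2, h5]
  -- partial error sums are small beyond n₀
  have hsum_shift : ∀ n, (∑ i ∈ Finset.Ico n₀ n, a * ((mb (i + 1) : ℝ))⁻¹) ≤ φ := by
    intro n
    rw [← Finset.mul_sum]
    have h1 : (∑ i ∈ Finset.Ico n₀ n, ((mb (i + 1) : ℝ))⁻¹)
        ≤ ∑' i : ℕ, ((mb (n₀ + i + 1) : ℝ))⁻¹ := by
      rw [Finset.sum_Ico_eq_sum_range]
      exact Summable.sum_le_tsum (Finset.range (n - n₀)) (fun i _ => (hinvpos _).le) (hsum_tail n₀)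
    calc a * (∑ i ∈ Finset.Ico n₀ n, ((mb (i + 1) : ℝ))⁻¹)
        ≤ a * (∑' i : ℕ, ((mb (n₀ + i + 1) : ℝ))⁻¹) :=
          mul_le_mul_of_nonneg_left h1 hapos.le
      _ ≤ φ := htail
  have hs_bound : ∀ n, (∑ i ∈ Finset.Ico n₀ n, θ i) ≤ φ + φ ^ 2 := by
    intro n
    have hA := hsum_shift n
    have hB : (∑ i ∈ Finset.Ico n₀ n, a ^ 2 * (((mb (i + 1) : ℝ)) ^ 2)⁻¹) ≤ φ ^ 2 := by
      calc (∑ i ∈ Finset.Ico n₀ n, a ^ 2 * (((mb (i + 1) : ℝ)) ^ 2)⁻¹)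
          = ∑ i ∈ Finset.Ico n₀ n, (a * ((mb (i + 1) : ℝ))⁻¹) ^ 2 :=
            Finset.sum_congr rfl fun i _ => by rw [mul_pow, inv_pow]
        _ ≤ (∑ i ∈ Finset.Ico n₀ n, a * ((mb (i + 1) : ℝ))⁻¹) ^ 2 :=
            Finset.sum_sq_le_sq_sum_of_nonneg fun i _ => by positivity
        _ ≤ φ ^ 2 := by
            have hnn : (0:ℝ) ≤ ∑ i ∈ Finset.Ico n₀ n, a * ((mb (i + 1) : ℝ))⁻¹ :=
              Finset.sum_nonneg fun i _ => by positivity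
            exact pow_le_pow_left₀ hnn hA 2
    have hsplit : (∑ i ∈ Finset.Ico n₀ n, θ i)
        = (∑ i ∈ Finset.Ico n₀ n, a * ((mb (i + 1) : ℝ))⁻¹)
          + ∑ i ∈ Finset.Ico n₀ n, a ^ 2 * (((mb (i + 1) : ℝ)) ^ 2)⁻¹ := by
      rw [← Finset.sum_add_distrib]
      exact Finset.sum_congr rfl fun i _ => by rw [hθdef]
    linarith
  -- discrete Gronwall estimate beyond n₀
  have gron : ∀ n, n₀ ≤ n →
      (1 + D n) * (1 - ∑ i ∈ Finset.Ico n₀ n, θ i) ≤ 1 + D n₀ := by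
    intro n hn
    induction n, hn using Nat.le_induction with
    | base => simp
    | succ n hn ih =>
      rw [Finset.sum_Ico_succ_top hn]
      have h1 := step2 n
      have h2 := hs_bound (n + 1)
      rw [Finset.sum_Ico_succ_top hn] at h2
      have hsn : 0 ≤ ∑ i ∈ Finset.Ico n₀ n, θ i := Finset.sum_nonneg fun i _ => hθ0 i
      have hu : (0:ℝ) ≤ 1 + D n := by linarith [hD0 n]
      have hst : (0:ℝ) ≤ 1 - ((∑ i ∈ Finset.Ico n₀ n, θ i) + θ n) := by linarith
      have hv : (1 + D (n + 1)) ≤ (1 + D n) + θ n * (1 + D n) := by linarith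
      have hP := mul_le_mul_of_nonneg_right hv hst
      have hq1 := mul_nonneg (mul_nonneg hu (hθ0 n)) hsn
      have hq2 := mul_nonneg (mul_nonneg hu (hθ0 n)) (hθ0 n)
      nlinarith [hP, hq1, hq2, ih]
  -- the uniform bound D n ≤ H
  have hMx : ∀ i, i ≤ n₀ → D i ≤ (Finset.range (n₀ + 1)).sup'
      (Finset.nonempty_range_iff.mpr (Nat.succ_ne_zero n₀)) D := by
    intro i hi
    exact Finset.le_sup' D (Finset.mem_range.mpr (Nat.lt_succ_of_le hi))
  have hMx0 : (0:ℝ) ≤ (Finset.range (n₀ + 1)).sup'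
      (Finset.nonempty_range_iff.mpr (Nat.succ_ne_zero n₀)) D :=
    le_trans (hD0 0) (hMx 0 (Nat.zero_le n₀))
  have hHpos : 0 ≤ H := by
    rw [hH]
    exact div_nonneg (by linarith) hφ1.le
  have hDH : ∀ n, D n ≤ H := by
    intro n
    by_cases hn : n ≤ n₀
    · have h1 := hMx n hn
      rw [hH, le_div_iff₀ hφ1]
      nlinarith [mul_nonneg (hD0 n) (by nlinarith [hφ.1] : (0:ℝ) ≤ φ + φ ^ 2)]
    · push_neg at hn
      have hg := gron n hn.le
      have hs := hs_bound n
      have hsn : 0 ≤ ∑ i ∈ Finset.Ico n₀ n, θ i := Finset.sum_nonneg fun i _ => hθ0 i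
      have h2 := hMx n₀ le_rfl
      have hu : (0:ℝ) ≤ 1 + D n := by linarith [hD0 n]
      have hP : (1 + D n) * (1 - (φ + φ ^ 2))
          ≤ (1 + D n) * (1 - ∑ i ∈ Finset.Ico n₀ n, θ i) :=
        mul_le_mul_of_nonneg_left (by linarith) hu
      rw [hH, le_div_iff₀ hφ1]
      nlinarith [hP, hg, h2]
  -- the summed estimate
  have main : ∀ N, D N + (ρ / 2) * (∑ n ∈ Finset.range N, R n)
      ≤ D 0 + (1 + H) * (∑ n ∈ Finset.range N, θ n) := by
    intro N
    induction N with
    | zero => simp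
    | succ N ih =>
      rw [Finset.sum_range_succ, Finset.sum_range_succ]
      have h1 := step N
      have h2 := herr N
      have h3 : θ N * (1 + D N) ≤ θ N * (1 + H) :=
        mul_le_mul_of_nonneg_left (by linarith [hDH N]) (hθ0 N)
      nlinarith [h1, h2, h3, ih]
  have hθsum : ∀ K, (∑ n ∈ Finset.range (K + 1), θ n) = a * Γ K + a ^ 2 * Γsq K := by
    intro K
    rw [hΓ K, hΓsq K, Finset.mul_sum, Finset.mul_sum, ← Finset.sum_add_distrib]
    exact Finset.sum_congr rfl fun i _ => by rw [hθdef]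
  -- Λ is bounded above
  have hsum1 : Summable (fun i => ((mb (i + 1) : ℝ))⁻¹) := by
    have h := hsum_tail 0
    refine h.congr fun i => ?_
    have hi : 0 + i + 1 = i + 1 := by omega
    rw [hi]
  have hsum2 : Summable (fun i => (((mb (i + 1) : ℝ)) ^ 2)⁻¹) := by
    refine Summable.of_nonneg_of_le (fun i => by positivity) (fun i => ?_) hsum1
    have hm1 : (1:ℝ) ≤ (mb (i + 1) : ℝ) := by exact_mod_cast hmb (i + 1)
    exact inv_anti₀ (by linarith) (by nlinarith)
  have hΛbdd : BddAbove (Set.range Λ) := by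
    refine ⟨(2 / ρ) * (D 0 + (1 + H) * (a * (∑' i, ((mb (i + 1) : ℝ))⁻¹)
      + a ^ 2 * (∑' i, (((mb (i + 1) : ℝ)) ^ 2)⁻¹))), ?_⟩
    rintro x ⟨n, rfl⟩
    rw [hΛ n, hΓ n, hΓsq n,
      show (∫ ω, ‖X 0 ω - xs‖ ^ 2 ∂μ) = D 0 from by simp only [hD]]
    have g1 : (∑ i ∈ Finset.range (n + 1), ((mb (i + 1) : ℝ))⁻¹)
        ≤ ∑' i, ((mb (i + 1) : ℝ))⁻¹ :=
      Summable.sum_le_tsum _ (fun i _ => by positivity) hsum1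
    have g2 : (∑ i ∈ Finset.range (n + 1), (((mb (i + 1) : ℝ)) ^ 2)⁻¹)
        ≤ ∑' i, (((mb (i + 1) : ℝ)) ^ 2)⁻¹ :=
      Summable.sum_le_tsum _ (fun i _ => by positivity) hsum2
    have h1H : (0:ℝ) ≤ 1 + H := by linarith
    have e1 := mul_le_mul_of_nonneg_left g1 hapos.le
    have e2 := mul_le_mul_of_nonneg_left g2 (sq_nonneg a)
    have e3 := mul_le_mul_of_nonneg_left (by linarith :
      a * (∑ i ∈ Finset.range (n + 1), ((mb (i + 1) : ℝ))⁻¹)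
        + a ^ 2 * (∑ i ∈ Finset.range (n + 1), (((mb (i + 1) : ℝ)) ^ 2)⁻¹)
      ≤ a * (∑' i, ((mb (i + 1) : ℝ))⁻¹)
        + a ^ 2 * (∑' i, (((mb (i + 1) : ℝ)) ^ 2)⁻¹)) h1H
    exact mul_le_mul_of_nonneg_left (by linarith) (by positivity)
  have hΛle : ∀ n, Λ n ≤ Λinf := by
    intro n
    rw [hΛinf]
    exact le_ciSup hΛbdd n
  -- the stopping set is nonempty and Nε belongs to it
  have hSne : {n : ℕ | (∫ ω, ‖X n ω - proj (X n ω - α • T (X n ω))‖ ^ 2 ∂μ) ≤ ε}.Nonempty := by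
    by_contra hcon
    rw [Set.not_nonempty_iff_eq_empty] at hcon
    rw [hcon, Nat.sInf_empty] at hNε
    exact hN0 hNε
  have hmem := Nat.sInf_mem hSne
  rw [← hNε] at hmem
  refine ⟨hmem, ?_⟩
  obtain ⟨K, hK⟩ := Nat.exists_eq_succ_of_ne_zero hN0
  -- the sum of residuals up to Nε is bounded by Λ K
  have hsumle : (∑ n ∈ Finset.range Nε, R n) ≤ Λ K := by
    have h1 := main Nε
    rw [hK] at h1
    rw [hθsum K] at h1
    rw [hΛ K, show (∫ ω, ‖X 0 ω - xs‖ ^ 2 ∂μ) = D 0 from by simp only [hD], hK]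
    have h3 : (ρ / 2) * (∑ n ∈ Finset.range (K + 1), R n)
        ≤ D 0 + (1 + H) * (a * Γ K + a ^ 2 * Γsq K) := by linarith [hD0 (K + 1)]
    calc (∑ n ∈ Finset.range (K + 1), R n)
        = (2 / ρ) * ((ρ / 2) * (∑ n ∈ Finset.range (K + 1), R n)) := by
          field_simp
      _ ≤ (2 / ρ) * (D 0 + (1 + H) * (a * Γ K + a ^ 2 * Γsq K)) :=
          mul_le_mul_of_nonneg_left h3 (by positivity)
  -- the residuals before Nε all exceed ε
  have hsumlt : (Nε : ℝ) * ε < ∑ n ∈ Finset.range Nε, R n := by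
    have h := Finset.sum_lt_sum_of_nonempty (Finset.nonempty_range_iff.mpr hN0)
      (f := fun _ => ε) (g := R) ?_
    · simpa [Finset.sum_const, Finset.card_range, nsmul_eq_mul] using h
    · intro i hi
      have hilt : i < Nε := Finset.mem_range.mp hi
      rw [hNε] at hilt
      have hnot := Nat.notMem_of_lt_sInf hilt
      simp only [Set.mem_setOf_eq, not_le] at hnot
      simpa only [hR] using hnot
  have hfin : (Nε : ℝ) * ε < Λinf := lt_of_lt_of_le hsumlt (hsumle.trans (hΛle K))
  have hNpos : (0:ℝ) < (Nε : ℝ) := by exact_mod_cast Nat.pos_of_ne_zero hN0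
  rw [lt_div_iff₀ hNpos]
  linarith
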